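/- On 𝔤₂₄ with the pseudo-Kähler structure of the previous statement, the curvature tensor of the associated metric g = ω∘J has, up to symmetries, only the nonzero components R¹²₂⁶ = −ψ₁₁², R¹²₁⁶ = −(1+ψ₁₁²)ψ₁₁/ψ₁₂, R¹²₂⁵ = −ψ₁₂ψ₁₁, R¹²₁⁵ = −ψ₁₁², and after lowering the index there is exactly one nonzero component R(e₁,e₂,e₁,e₂) = ψ₁₁. -/
import Mathlib

noncomputable section

/-- The underlying space ℝ⁶ of 𝔤₂₄ = 𝔥₃ × 𝔥₃. -/
abbrev V24 : Type := Fin 6 → ℝ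

/-- Standard basis vectors e₁,…,e₆ (0-indexed). -/
def e24 (i : Fin 6) : V24 := Pi.single i 1

/-- Bracket of 𝔤₂₄: [e₁,e₄] = e₆, [e₂,e₃] = e₅. -/
def br24 (X Y : V24) : V24 :=
  ![0, 0, 0, 0, X 1 * Y 2 - X 2 * Y 1, X 0 * Y 3 - X 3 * Y 0]

/-- ω = e¹∧e⁶ + e²∧e⁵ + e³∧e⁴. -/
def om24 (X Y : V24) : ℝ :=
  (X 0 * Y 5 - X 5 * Y 0) + (X 1 * Y 4 - X 4 * Y 1) + (X 2 * Y 3 - X 3 * Y 2)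

/-- The complex structure J on 𝔤₂₄ with parameters ψ₁₁ ≠ 0, ψ₁₂ ≠ 0. -/
def J24 (p q : ℝ) (X : V24) : V24 :=
  ![p * X 0 + q * X 1,
    -((1 + p ^ 2) / q) * X 0 - p * X 1,
    ((p ^ 2 - 1) / (2 * p)) * X 2 + (q ^ 2 / (2 * p)) * X 3,
    -((2 * p ^ 2 + p ^ 4 + 1) / (2 * p * q ^ 2)) * X 2 - ((p ^ 2 - 1) / (2 * p)) * X 3,
    p * X 4 - q * X 5,
    ((1 + p ^ 2) / q) * X 4 - p * X 5]

/-- Associated metric g(X,Y) = ω(X, JY). -/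
def g24 (p q : ℝ) (X Y : V24) : ℝ := om24 X (J24 p q Y)

/-- The explicit Levi-Civita connection of g24. -/
def Nf24 (p q : ℝ) (X Y : V24) : V24 :=
  ![0, 0,
    (p^2-1)/2*(X 0*Y 0) + p*q/2*(X 0*Y 1 + X 1*Y 0) + q^2/2*(X 1*Y 1),
    -((1+p^2)^2/(2*q^2))*(X 0*Y 0) - p*(1+p^2)/(2*q)*(X 0*Y 1 + X 1*Y 0)
      + (1-p^2)/2*(X 1*Y 1),
    -(p*(1+p^2)/(2*q))*(X 0*Y 2 + X 2*Y 0) + (1-p^2)/2*(X 1*Y 2) - (1+p^2)/2*(X 2*Y 1)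
      - p*q/2*(X 0*Y 3 + X 3*Y 0) - q^2/2*(X 1*Y 3 + X 3*Y 1),
    -((1+p^2)^2/(2*q^2))*(X 0*Y 2 + X 2*Y 0) - p*(1+p^2)/(2*q)*(X 1*Y 2 + X 2*Y 1)
      + (1-p^2)/2*(X 0*Y 3) - (1+p^2)/2*(X 3*Y 0) - p*q/2*(X 1*Y 3 + X 3*Y 1)]

lemma cons_val_five24 {α : Type*} (a b c d e f : α) :
    (![a,b,c,d,e,f] : Fin 6 → α) 5 = f := rfl

/-- Nondegeneracy of g24. -/
lemma nondeg24 (p q : ℝ) (hp : p ≠ 0) (hq : q ≠ 0) (v : V24)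
    (h : ∀ k : Fin 6, g24 p q v (e24 k) = 0) : v = 0 := by
  have h0 := h 0; have h1 := h 1; have h2 := h 2
  have h3 := h 3; have h4 := h 4; have h5 := h 5
  funext i
  fin_cases i
  · have : v 0 = q * g24 p q v (e24 4) + p * g24 p q v (e24 5) := by
      simp [g24, om24, J24, e24, cons_val_five24]; field_simp; ring
    rw [h4, h5] at this; simpa using this
  · have : v 1 = -p * g24 p q v (e24 4) - ((1+p^2)/q) * g24 p q v (e24 5) := by
      simp [g24, om24, J24, e24, cons_val_five24]; field_simp; ring
    rw [h4, h5] at this; simpa using this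
  · have : v 2 = -(q^2/(2*p)) * g24 p q v (e24 2) - ((1-p^2)/(2*p)) * g24 p q v (e24 3) := by
      simp [g24, om24, J24, e24, cons_val_five24]; field_simp; ring
    rw [h2, h3] at this; simpa using this
  · have : v 3 = -((1-p^2)/(2*p)) * g24 p q v (e24 2)
        - ((1+p^2)^2/(2*p*q^2)) * g24 p q v (e24 3) := by
      simp [g24, om24, J24, e24, cons_val_five24]; field_simp; ring
    rw [h2, h3] at this; simpa using this
  · have : v 4 = q * g24 p q v (e24 0) - p * g24 p q v (e24 1) := by
      simp [g24, om24, J24, e24, cons_val_five24]; field_simp; ring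
    rw [h0, h1] at this; simpa using this
  · have : v 5 = p * g24 p q v (e24 0) - ((1+p^2)/q) * g24 p q v (e24 1) := by
      simp [g24, om24, J24, e24, cons_val_five24]; field_simp; ring
    rw [h0, h1] at this; simpa using this

lemma g24_sub (p q : ℝ) (x y z : V24) :
    g24 p q (x - y) z = g24 p q x z - g24 p q y z := by
  simp [g24, om24, J24, cons_val_five24]; ring

lemma pairzero (i j : Fin 6) (h : ({i, j} : Finset (Fin 6)) ≠ {0, 1}) :
    e24 i 0 * e24 j 1 - e24 i 1 * e24 j 0 = 0 := by
  fin_cases i <;> fin_cases j <;>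
    first
      | (exact absurd (by decide) h)
      | (simp [e24])

set_option maxHeartbeats 4000000
/-- the curvature of the associated metric on 𝔤₂₄ has
R¹²₂⁶ = −ψ₁₁², R¹²₁⁶ = −(1+ψ₁₁²)ψ₁₁/ψ₁₂, R¹²₂⁵ = −ψ₁₂ψ₁₁, R¹²₁⁵ = −ψ₁₁²,
and after lowering the index, R(e₁,e₂,e₁,e₂) = ψ₁₁ is the only nonzero component. -/
theorem g24_curvature (p q : ℝ) (hp : p ≠ 0) (hq : q ≠ 0)
    (nabla : V24 → V24 → V24)
    (hkoszul : ∀ X Y Z : V24,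
      2 * g24 p q (nabla X Y) Z
        = g24 p q (br24 X Y) Z + g24 p q (br24 Z X) Y + g24 p q X (br24 Z Y))
    (R : V24 → V24 → V24 → V24)
    (hR : ∀ X Y Z : V24,
      R X Y Z = nabla X (nabla Y Z) - nabla Y (nabla X Z) - nabla (br24 X Y) Z) :
    R (e24 0) (e24 1) (e24 1) 5 = -p ^ 2 ∧
    R (e24 0) (e24 1) (e24 0) 5 = -(1 + p ^ 2) * p / q ∧
    R (e24 0) (e24 1) (e24 1) 4 = -q * p ∧
    R (e24 0) (e24 1) (e24 0) 4 = -p ^ 2 ∧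
    g24 p q (R (e24 0) (e24 1) (e24 0)) (e24 1) = p ∧
    (∀ i j k l : Fin 6,
      ¬(({i, j} : Finset (Fin 6)) = {0, 1} ∧ ({k, l} : Finset (Fin 6)) = {0, 1}) →
      g24 p q (R (e24 i) (e24 j) (e24 k)) (e24 l) = 0) := by
  have key : ∀ X Y : V24, nabla X Y = Nf24 p q X Y := by
    intro X Y
    have hsub : nabla X Y - Nf24 p q X Y = 0 := by
      apply nondeg24 p q hp hq
      intro k
      have h1 := hkoszul X Y (e24 k)
      have h2 : 2 * g24 p q (Nf24 p q X Y) (e24 k)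
          = g24 p q (br24 X Y) (e24 k) + g24 p q (br24 (e24 k) X) Y
            + g24 p q X (br24 (e24 k) Y) := by
        fin_cases k <;>
          (simp [g24, om24, J24, br24, Nf24, e24, cons_val_five24]; try field_simp) <;>
          try ring
      rw [g24_sub]; linarith
    exact sub_eq_zero.mp hsub
  have hRc : ∀ X Y Z : V24, R X Y Z
      = Nf24 p q X (Nf24 p q Y Z) - Nf24 p q Y (Nf24 p q X Z)
        - Nf24 p q (br24 X Y) Z := by
    intro X Y Z
    rw [hR, key X (nabla Y Z), key Y Z, key Y (nabla X Z), key X Z, key (br24 X Y) Z]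
  have hlow : ∀ X Y Z W : V24,
      g24 p q (Nf24 p q X (Nf24 p q Y Z) - Nf24 p q Y (Nf24 p q X Z)
        - Nf24 p q (br24 X Y) Z) W
      = p * (X 0 * Y 1 - X 1 * Y 0) * (Z 0 * W 1 - Z 1 * W 0) := by
    intro X Y Z W
    simp [g24, om24, J24, Nf24, br24, cons_val_five24]
    field_simp
    ring
  refine ⟨?_, ?_, ?_, ?_, ?_, ?_⟩
  · rw [hRc]
    simp [Nf24, br24, e24, cons_val_five24]
    field_simp
    ring
  · rw [hRc]
    simp [Nf24, br24, e24, cons_val_five24]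
    field_simp
    ring
  · rw [hRc]
    simp [Nf24, br24, e24, cons_val_five24]
    field_simp
    ring
  · rw [hRc]
    simp [Nf24, br24, e24, cons_val_five24]
    field_simp
    ring
  · rw [hRc, hlow]
    simp [e24]
  · intro i j k l hcon
    rw [hRc, hlow]
    rw [not_and_or] at hcon
    rcases hcon with h | h
    · rw [pairzero i j h]; ring
    · rw [pairzero k l h]; ring
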